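/- Let b1, b2 be binary vectors of length n, let k = #{i : (b1)_i = 1 and (b2)_i = 0} and l = #{i : (b1)_i = 0 and (b2)_i = 1}, and suppose k ≥ l. Then in ℤ[q,q^{−1}]: ∑_{i : (b1)_i = 1, (b2)_i = 0} (−q)^{flex_{b1,b2}(i)} − ∑_{i : (b1)_i = 0, (b2)_i = 1} (−q)^{flex_{b1,b2}(i)} = ∑_{j=1}^{k−l} (−q)^{(k−l)+1−2j}. (This identity is the algebraic content of the square-switch relation on Fontaine web vectors: the right-hand side is the quantum integer [k−l] evaluated at −q.) -/
import Mathlib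


/-- `flex_{b1,b2}(i)` for binary vectors `b1, b2` of length `n`. -/
def flexp (n : ℕ) (b1 b2 : ℕ → ℤ) (i : ℕ) : ℤ :=
  (((Finset.Icc 1 n).filter (fun j => j < i ∧ b1 j = 1 ∧ b2 j = 0)).card : ℤ)
    - (((Finset.Icc 1 n).filter (fun j => j < i ∧ b1 j = 0 ∧ b2 j = 1)).card : ℤ)
    - (((Finset.Icc 1 n).filter (fun j => i < j ∧ b1 j = 1 ∧ b2 j = 0)).card : ℤ)
    + (((Finset.Icc 1 n).filter (fun j => i < j ∧ b1 j = 0 ∧ b2 j = 1)).card : ℤ)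

/-- `(−q)^m = (−1)^m q^m` in the Laurent polynomial ring `ℤ[q,q⁻¹]`. -/
noncomputable def negqpow (m : ℤ) : LaurentPolynomial ℤ :=
  ((((-1 : ℤˣ) ^ m : ℤˣ) : ℤ) : LaurentPolynomial ℤ) * LaurentPolynomial.T m

lemma negqpow_add (a b : ℤ) : negqpow (a + b) = negqpow a * negqpow b := by
  unfold negqpow
  rw [zpow_add, LaurentPolynomial.T_add]
  push_cast
  ring

lemma Icc_one_succ (n : ℕ) : Finset.Icc 1 (n+1) = insert (n+1) (Finset.Icc 1 n) := by
  rw [← Finset.Ico_insert_right (show (1:ℕ) ≤ n+1 by omega), Finset.Ico_add_one_right_eq_Icc]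

lemma card_filter_succ (n : ℕ) (P : ℕ → Prop) [DecidablePred P] :
    ((Finset.Icc 1 (n+1)).filter P).card
      = ((Finset.Icc 1 n).filter P).card + (if P (n+1) then 1 else 0) := by
  rw [Icc_one_succ, Finset.filter_insert]
  split
  · rw [Finset.card_insert_of_notMem (by simp)]
  · simp

lemma flexp_succ (n : ℕ) (b1 b2 : ℕ → ℤ) (i : ℕ) (hi : i ≤ n) :
    flexp (n+1) b1 b2 i = flexp n b1 b2 i
      - (if b1 (n+1) = 1 ∧ b2 (n+1) = 0 then 1 else 0)
      + (if b1 (n+1) = 0 ∧ b2 (n+1) = 1 then 1 else 0) := by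
  unfold flexp
  rw [card_filter_succ, card_filter_succ, card_filter_succ, card_filter_succ]
  have h1 : ¬ (n+1 < i) := by omega
  have h2 : i < n+1 := by omega
  simp only [h1, h2, false_and, true_and, if_false]
  split_ifs <;> push_cast <;> ring

lemma flexp_top (n : ℕ) (b1 b2 : ℕ → ℤ) :
    flexp (n+1) b1 b2 (n+1)
      = (((Finset.Icc 1 n).filter (fun j => b1 j = 1 ∧ b2 j = 0)).card : ℤ)
        - (((Finset.Icc 1 n).filter (fun j => b1 j = 0 ∧ b2 j = 1)).card : ℤ) := by
  unfold flexp
  have e1 : (Finset.Icc 1 (n+1)).filter (fun j => j < n+1 ∧ b1 j = 1 ∧ b2 j = 0)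
      = (Finset.Icc 1 n).filter (fun j => b1 j = 1 ∧ b2 j = 0) := by
    ext j; simp only [Finset.mem_filter, Finset.mem_Icc]; omega
  have e2 : (Finset.Icc 1 (n+1)).filter (fun j => j < n+1 ∧ b1 j = 0 ∧ b2 j = 1)
      = (Finset.Icc 1 n).filter (fun j => b1 j = 0 ∧ b2 j = 1) := by
    ext j; simp only [Finset.mem_filter, Finset.mem_Icc]; omega
  have e3 : (Finset.Icc 1 (n+1)).filter (fun j => n+1 < j ∧ b1 j = 1 ∧ b2 j = 0) = ∅ := by
    ext j; simp only [Finset.mem_filter, Finset.mem_Icc, Finset.notMem_empty, iff_false]; omega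
  have e4 : (Finset.Icc 1 (n+1)).filter (fun j => n+1 < j ∧ b1 j = 0 ∧ b2 j = 1) = ∅ := by
    ext j; simp only [Finset.mem_filter, Finset.mem_Icc, Finset.notMem_empty, iff_false]; omega
  rw [e1, e2, e3, e4]
  simp

noncomputable def Gq (m : ℤ) : LaurentPolynomial ℤ :=
  if 0 ≤ m then ∑ j ∈ Finset.Icc 1 m.toNat, negqpow (2*(j:ℤ) - 1)
  else - ∑ j ∈ Finset.Icc 1 (-m).toNat, negqpow (1 - 2*(j:ℤ))

lemma Gq_succ (m : ℤ) : Gq (m+1) = Gq m + negqpow (2*m+1) := by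
  rcases le_or_gt 0 m with hm | hm
  · rw [Gq, Gq, if_pos (by omega), if_pos hm,
      show (m+1).toNat = m.toNat + 1 by omega,
      Finset.sum_Icc_succ_top (by omega)]
    congr 2
    omega
  · rcases eq_or_lt_of_le (show m ≤ -1 by omega) with hm1 | hm1
    · subst hm1
      rw [Gq, Gq, if_pos (by omega), if_neg (by omega)]
      simp
    · rw [Gq, Gq, if_neg (by omega), if_neg (by omega),
        show (-m).toNat = (-(m+1)).toNat + 1 by omega,
        Finset.sum_Icc_succ_top (by omega)]
      push_cast
      rw [show (1 - 2*(((-(m+1)).toNat:ℤ) + 1)) = 2*m+1 by omega]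
      ring

lemma aux_sum (b1 b2 : ℕ → ℤ) (n : ℕ) :
    (∑ i ∈ (Finset.Icc 1 n).filter (fun i => b1 i = 1 ∧ b2 i = 0),
        negqpow (flexp n b1 b2 i))
      - (∑ i ∈ (Finset.Icc 1 n).filter (fun i => b1 i = 0 ∧ b2 i = 1),
          negqpow (flexp n b1 b2 i))
      = negqpow ((((Finset.Icc 1 n).filter (fun i => b1 i = 0 ∧ b2 i = 1)).card : ℤ)
            - (((Finset.Icc 1 n).filter (fun i => b1 i = 1 ∧ b2 i = 0)).card : ℤ))
        * Gq ((((Finset.Icc 1 n).filter (fun i => b1 i = 1 ∧ b2 i = 0)).card : ℤ)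
            - (((Finset.Icc 1 n).filter (fun i => b1 i = 0 ∧ b2 i = 1)).card : ℤ)) := by
  induction n with
  | zero => simp [Gq]
  | succ n ih =>
    set SS := (Finset.Icc 1 n).filter (fun i => b1 i = 1 ∧ b2 i = 0) with hSS
    set TT := (Finset.Icc 1 n).filter (fun i => b1 i = 0 ∧ b2 i = 1) with hTT
    have hmemle : ∀ i ∈ Finset.Icc 1 n, i ≤ n := fun i hi => (Finset.mem_Icc.mp hi).2
    have hnotS : (n+1) ∉ SS := by simp [hSS]
    have hnotT : (n+1) ∉ TT := by simp [hTT]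
    have hfS : (Finset.Icc 1 (n+1)).filter (fun i => b1 i = 1 ∧ b2 i = 0)
        = if b1 (n+1) = 1 ∧ b2 (n+1) = 0 then insert (n+1) SS else SS := by
      rw [Icc_one_succ, Finset.filter_insert]
    have hfT : (Finset.Icc 1 (n+1)).filter (fun i => b1 i = 0 ∧ b2 i = 1)
        = if b1 (n+1) = 0 ∧ b2 (n+1) = 1 then insert (n+1) TT else TT := by
      rw [Icc_one_succ, Finset.filter_insert]
    have hcS := card_filter_succ n (fun i => b1 i = 1 ∧ b2 i = 0)
    have hcT := card_filter_succ n (fun i => b1 i = 0 ∧ b2 i = 1)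
    by_cases hS : b1 (n+1) = 1 ∧ b2 (n+1) = 0
    · have hT : ¬ (b1 (n+1) = 0 ∧ b2 (n+1) = 1) := by
        rintro ⟨h0, _⟩; rw [hS.1] at h0; norm_num at h0
      have hflex : ∀ i ∈ Finset.Icc 1 n, flexp (n+1) b1 b2 i = -1 + flexp n b1 b2 i := by
        intro i hi
        rw [flexp_succ n b1 b2 i (hmemle i hi), if_pos hS, if_neg hT]; ring
      have hA : ∑ i ∈ SS, negqpow (flexp (n+1) b1 b2 i)
          = negqpow (-1) * ∑ i ∈ SS, negqpow (flexp n b1 b2 i) := by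
        rw [Finset.mul_sum]
        refine Finset.sum_congr rfl fun i hi => ?_
        rw [hflex i (Finset.mem_filter.mp hi).1, negqpow_add]
      have hB : ∑ i ∈ TT, negqpow (flexp (n+1) b1 b2 i)
          = negqpow (-1) * ∑ i ∈ TT, negqpow (flexp n b1 b2 i) := by
        rw [Finset.mul_sum]
        refine Finset.sum_congr rfl fun i hi => ?_
        rw [hflex i (Finset.mem_filter.mp hi).1, negqpow_add]
      rw [hfS, if_pos hS, hfT, if_neg hT, Finset.sum_insert hnotS, hA, hB,
        flexp_top, Finset.card_insert_of_notMem hnotS, ← hSS, ← hTT]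
      push_cast
      set K := ((SS.card : ℤ)) with hK
      set L := ((TT.card : ℤ)) with hL
      rw [show L - (K + 1) = -1 + (L - K) by ring, negqpow_add,
        show K + 1 - L = (K - L) + 1 by ring, Gq_succ]
      have h3 : negqpow (-1) * negqpow (L - K) * negqpow (2*(K-L)+1) = negqpow (K - L) := by
        rw [← negqpow_add, ← negqpow_add]; congr 1; ring
      linear_combination negqpow (-1) * ih - h3
    · by_cases hT : b1 (n+1) = 0 ∧ b2 (n+1) = 1
      · have hflex : ∀ i ∈ Finset.Icc 1 n, flexp (n+1) b1 b2 i = 1 + flexp n b1 b2 i := by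
          intro i hi
          rw [flexp_succ n b1 b2 i (hmemle i hi), if_pos hT, if_neg hS]; ring
        have hA : ∑ i ∈ SS, negqpow (flexp (n+1) b1 b2 i)
            = negqpow 1 * ∑ i ∈ SS, negqpow (flexp n b1 b2 i) := by
          rw [Finset.mul_sum]
          refine Finset.sum_congr rfl fun i hi => ?_
          rw [hflex i (Finset.mem_filter.mp hi).1, negqpow_add]
        have hB : ∑ i ∈ TT, negqpow (flexp (n+1) b1 b2 i)
            = negqpow 1 * ∑ i ∈ TT, negqpow (flexp n b1 b2 i) := by
          rw [Finset.mul_sum]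
          refine Finset.sum_congr rfl fun i hi => ?_
          rw [hflex i (Finset.mem_filter.mp hi).1, negqpow_add]
        rw [hfS, if_neg hS, hfT, if_pos hT, Finset.sum_insert hnotT, hA, hB,
          flexp_top, Finset.card_insert_of_notMem hnotT, ← hSS, ← hTT]
        push_cast
        set K := ((SS.card : ℤ)) with hK
        set L := ((TT.card : ℤ)) with hL
        have hg : Gq (K - L) = Gq (K - (L+1)) + negqpow (2*(K - (L+1))+1) := by
          have := Gq_succ (K - (L+1))
          rw [show K - (L+1) + 1 = K - L by ring] at this
          exact this
        rw [hg] at ih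
        rw [show L + 1 - K = 1 + (L - K) by ring, negqpow_add]
        have h3 : negqpow 1 * negqpow (L - K) * negqpow (2*(K-(L+1))+1) = negqpow (K - L) := by
          rw [← negqpow_add, ← negqpow_add]; congr 1; ring
        linear_combination negqpow 1 * ih + h3
      · have hflex : ∀ i ∈ Finset.Icc 1 n, flexp (n+1) b1 b2 i = flexp n b1 b2 i := by
          intro i hi
          rw [flexp_succ n b1 b2 i (hmemle i hi), if_neg hT, if_neg hS]; ring
        have hA : ∑ i ∈ SS, negqpow (flexp (n+1) b1 b2 i)
            = ∑ i ∈ SS, negqpow (flexp n b1 b2 i) :=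
          Finset.sum_congr rfl fun i hi => by rw [hflex i (Finset.mem_filter.mp hi).1]
        have hB : ∑ i ∈ TT, negqpow (flexp (n+1) b1 b2 i)
            = ∑ i ∈ TT, negqpow (flexp n b1 b2 i) :=
          Finset.sum_congr rfl fun i hi => by rw [hflex i (Finset.mem_filter.mp hi).1]
        rw [hfS, if_neg hS, hfT, if_neg hT, hA, hB]
        exact ih

lemma Gq_mul (kk ll : ℕ) (h : ll ≤ kk) :
    negqpow ((ll:ℤ) - kk) * Gq ((kk:ℤ) - ll)
      = ∑ j ∈ Finset.Icc 1 (kk - ll), negqpow ((kk:ℤ) - ll + 1 - 2*j) := by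
  set d := kk - ll with hd
  have h1 : ((ll:ℤ) - kk) = -(d:ℤ) := by omega
  have h2 : ((kk:ℤ) - ll) = (d:ℤ) := by omega
  rw [h1, h2, Gq, if_pos (by positivity), Int.toNat_natCast, Finset.mul_sum]
  refine Finset.sum_nbij' (i := fun j => d + 1 - j) (j := fun j => d + 1 - j)
    (fun a ha => ?_) (fun a ha => ?_) (fun a ha => ?_) (fun a ha => ?_) (fun a ha => ?_)
  · simp only [Finset.mem_Icc] at *; omega
  · simp only [Finset.mem_Icc] at *; omega
  · simp only [Finset.mem_Icc] at *; omega
  · simp only [Finset.mem_Icc] at *; omega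
  · simp only [Finset.mem_Icc] at ha
    rw [← negqpow_add]
    congr 1
    have : ((d + 1 - a : ℕ) : ℤ) = (d:ℤ) + 1 - a := by omega
    rw [this]
    ring

/-- **Algebraic content of the square-switch relation.**  For binary vectors `b1, b2`
of length `n` with `k = #{i : (b1)_i = 1, (b2)_i = 0} ≥ l = #{i : (b1)_i = 0, (b2)_i = 1}`,
`∑_{(b1)_i=1,(b2)_i=0} (−q)^{flex(i)} − ∑_{(b1)_i=0,(b2)_i=1} (−q)^{flex(i)}
  = ∑_{j=1}^{k−l} (−q)^{(k−l)+1−2j}` in `ℤ[q,q⁻¹]`. -/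
theorem square_switch_sum (n k l : ℕ) (b1 b2 : ℕ → ℤ)
    (hb1 : ∀ i ∈ Finset.Icc 1 n, b1 i = 0 ∨ b1 i = 1)
    (hb2 : ∀ i ∈ Finset.Icc 1 n, b2 i = 0 ∨ b2 i = 1)
    (hk : ((Finset.Icc 1 n).filter (fun i => b1 i = 1 ∧ b2 i = 0)).card = k)
    (hl : ((Finset.Icc 1 n).filter (fun i => b1 i = 0 ∧ b2 i = 1)).card = l)
    (hkl : l ≤ k) :
    (∑ i ∈ (Finset.Icc 1 n).filter (fun i => b1 i = 1 ∧ b2 i = 0),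
        negqpow (flexp n b1 b2 i))
      - (∑ i ∈ (Finset.Icc 1 n).filter (fun i => b1 i = 0 ∧ b2 i = 1),
          negqpow (flexp n b1 b2 i))
      = ∑ j ∈ Finset.Icc 1 (k - l), negqpow ((k : ℤ) - l + 1 - 2 * j) := by
  rw [aux_sum, hk, hl, Gq_mul k l hkl]
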